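/- Let n ≥ 2, let Θ̂ be a real number with (n−2)·π/2 < Θ̂ < n·π/2, and let μ = (μ₁, …, μₙ) ∈ ℝⁿ satisfy, for every index j ∈ {1, …, n}, Σ_{i ≠ j} arctan(μᵢ) > Θ̂ − π/2. Fix p with 1 ≤ p ≤ n−1, and for each subset S ⊆ {1, …, n} with |S| = p let c_S ≥ 0 be a nonnegative real coefficient, not all of which are zero. Then the complex number Σ_{|S| = p} c_S · ∏_{i ∈ S} (1 + i·μᵢ) is nonzero and can be written as R·exp(i·φ) with R > 0 and Θ̂ − (n−p)·π/2 < φ < p·π/2. -/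

import Mathlib

open Real


lemma aux_sin_lt {x δ : ℝ} (hδ : δ < π/2) (hx : |x| < δ) :
    |Real.sin x| < Real.tan δ * Real.cos x := by
  have hδ0 : 0 < δ := lt_of_le_of_lt (abs_nonneg x) hx
  have hcosδ : 0 < Real.cos δ := Real.cos_pos_of_mem_Ioo ⟨by linarith, hδ⟩
  have hxlt : |x| < π/2 := hx.trans hδ
  have hcosx : 0 < Real.cos x := Real.cos_pos_of_mem_Ioo
    ⟨by cases abs_lt.1 hxlt; linarith, (le_abs_self x).trans_lt hxlt⟩
  have hsinabs : |Real.sin x| = Real.sin |x| := by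
    rcases abs_cases x with ⟨h1, h2⟩ | ⟨h1, h2⟩
    · rw [h1, abs_of_nonneg (Real.sin_nonneg_of_nonneg_of_le_pi h2
        (by linarith [abs_lt.1 hxlt, Real.pi_pos]))]
    · rw [h1, Real.sin_neg, abs_of_nonpos]
      exact Real.sin_nonpos_of_nonpos_of_neg_pi_le (le_of_lt h2)
        (by linarith [(abs_lt.1 hxlt).1])
  have hkey : Real.sin (|x| - δ) < 0 := by
    apply Real.sin_neg_of_neg_of_neg_pi_lt (by linarith)
    linarith [abs_nonneg x, Real.pi_pos]
  rw [Real.sin_sub] at hkey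
  have hcosax : Real.cos |x| = Real.cos x := by
    rcases abs_cases x with ⟨h1, _⟩ | ⟨h1, _⟩ <;> simp [h1, Real.cos_neg]
  rw [hcosax] at hkey
  rw [hsinabs, Real.tan_eq_sin_div_cos, div_mul_eq_mul_div, lt_div_iff₀ hcosδ]
  linarith

lemma arctan_nonneg' {x : ℝ} (hx : 0 ≤ x) : 0 ≤ Real.arctan x := by
  rw [← Real.arctan_zero]
  exact Real.arctan_strictMono.monotone hx

lemma sector_sum {ι : Type*} (T : Finset ι) (w θ : ι → ℝ) (a b : ℝ)
    (hab : b - a < π)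
    (hw : ∀ t ∈ T, 0 ≤ w t)
    (hθa : ∀ t ∈ T, a < θ t) (hθb : ∀ t ∈ T, θ t < b)
    (hex : ∃ t ∈ T, 0 < w t) :
    ∃ R φ : ℝ, 0 < R ∧ a < φ ∧ φ < b ∧
      (∑ t ∈ T, (w t : ℂ) * Complex.exp ((θ t : ℂ) * Complex.I)) =
        (R : ℂ) * Complex.exp (Complex.I * (φ : ℂ)) := by
  obtain ⟨t₀, ht₀T, ht₀⟩ := hex
  have hab' : a < b := (hθa t₀ ht₀T).trans (hθb t₀ ht₀T)
  set m : ℝ := (a + b) / 2 with hm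
  set δ : ℝ := (b - a) / 2 with hδdef
  have hδ0 : 0 < δ := by rw [hδdef]; linarith
  have hδπ : δ < π / 2 := by rw [hδdef]; linarith
  have hbound : ∀ t ∈ T, |θ t - m| < δ := by
    intro t ht
    rw [abs_lt, hm, hδdef]
    constructor
    · have := hθa t ht; linarith
    · have := hθb t ht; linarith
  set X : ℝ := ∑ t ∈ T, w t * Real.cos (θ t - m) with hX
  set Y : ℝ := ∑ t ∈ T, w t * Real.sin (θ t - m) with hY
  have hcospos : ∀ t ∈ T, 0 < Real.cos (θ t - m) := by
    intro t ht
    have h := (hbound t ht).trans hδπ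
    exact Real.cos_pos_of_mem_Ioo ⟨(abs_lt.1 h).1, (le_abs_self _).trans_lt h⟩
  have hXpos : 0 < X := by
    apply Finset.sum_pos' (fun t ht => mul_nonneg (hw t ht) (hcospos t ht).le)
    exact ⟨t₀, ht₀T, mul_pos ht₀ (hcospos t₀ ht₀T)⟩
  have hYbound : |Y| < Real.tan δ * X := by
    calc |Y| ≤ ∑ t ∈ T, |w t * Real.sin (θ t - m)| := Finset.abs_sum_le_sum_abs _ _
    _ = ∑ t ∈ T, w t * |Real.sin (θ t - m)| := by
        refine Finset.sum_congr rfl fun t ht => ?_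
        rw [abs_mul, abs_of_nonneg (hw t ht)]
    _ < ∑ t ∈ T, w t * (Real.tan δ * Real.cos (θ t - m)) := by
        apply Finset.sum_lt_sum
        · intro t ht
          exact mul_le_mul_of_nonneg_left (aux_sin_lt hδπ (hbound t ht)).le (hw t ht)
        · exact ⟨t₀, ht₀T, mul_lt_mul_of_pos_left (aux_sin_lt hδπ (hbound t₀ ht₀T)) ht₀⟩
    _ = Real.tan δ * X := by
        rw [hX, Finset.mul_sum]
        exact Finset.sum_congr rfl fun t _ => by ring
  set ψ : ℝ := Real.arctan (Y / X) with hψ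
  have hψlt : |ψ| < δ := by
    have h1 : |ψ| = Real.arctan (|Y| / X) := by
      rcases abs_cases Y with ⟨hy, hy0⟩ | ⟨hy, hy0⟩
      · rw [hy, hψ, abs_of_nonneg (arctan_nonneg' (div_nonneg hy0 hXpos.le))]
      · rw [hy, hψ, abs_of_nonpos, ← Real.arctan_neg, neg_div]
        rw [← Real.arctan_zero]
        apply Real.arctan_strictMono.monotone
        exact div_nonpos_of_nonpos_of_nonneg hy0.le hXpos.le
    rw [h1, ← Real.arctan_tan (x := δ) (by linarith) hδπ]
    apply Real.arctan_strictMono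
    rw [div_lt_iff₀ hXpos]
    exact hYbound
  set R : ℝ := Real.sqrt (X ^ 2 + Y ^ 2) with hR
  have hRpos : 0 < R := Real.sqrt_pos.2 (by positivity)
  have hsqrt : Real.sqrt (1 + (Y / X) ^ 2) = R / X := by
    rw [show 1 + (Y / X) ^ 2 = (X ^ 2 + Y ^ 2) / X ^ 2 by field_simp,
      Real.sqrt_div (by positivity), Real.sqrt_sq hXpos.le, hR]
  have hcosψ : Real.cos ψ = X / R := by
    rw [hψ, Real.cos_arctan, hsqrt, one_div_div]
  have hsinψ : Real.sin ψ = Y / R := by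
    rw [hψ, Real.sin_arctan, hsqrt]
    field_simp
  have key : (X : ℂ) + (Y : ℂ) * Complex.I = (R : ℂ) * Complex.exp ((ψ : ℂ) * Complex.I) := by
    rw [Complex.exp_mul_I, ← Complex.ofReal_cos, ← Complex.ofReal_sin, hcosψ, hsinψ]
    push_cast
    have hR0 : (R : ℂ) ≠ 0 := Complex.ofReal_ne_zero.2 hRpos.ne'
    field_simp
  have lhs_eq : (∑ t ∈ T, (w t : ℂ) * Complex.exp ((θ t : ℂ) * Complex.I)) =
      ((X : ℂ) + (Y : ℂ) * Complex.I) * Complex.exp ((m : ℂ) * Complex.I) := by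
    have hterm : ∀ t ∈ T, (w t : ℂ) * Complex.exp ((θ t : ℂ) * Complex.I) =
        (((w t * Real.cos (θ t - m) : ℝ) : ℂ) + ((w t * Real.sin (θ t - m) : ℝ) : ℂ) * Complex.I)
          * Complex.exp ((m : ℂ) * Complex.I) := by
      intro t _
      rw [show ((θ t : ℂ) * Complex.I) = ((θ t - m : ℝ) : ℂ) * Complex.I + (m : ℂ) * Complex.I by
        push_cast; ring, Complex.exp_add]
      rw [Complex.exp_mul_I, ← Complex.ofReal_cos, ← Complex.ofReal_sin]
      push_cast
      ring
    rw [Finset.sum_congr rfl hterm, ← Finset.sum_mul]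
    congr 1
    rw [Finset.sum_add_distrib, ← Finset.sum_mul, ← Complex.ofReal_sum, ← Complex.ofReal_sum,
      ← hX, ← hY]
  refine ⟨R, m + ψ, hRpos, ?_, ?_, ?_⟩
  · have := (abs_lt.1 hψlt).1; rw [hm]; rw [hδdef] at this; linarith
  · have := (abs_lt.1 hψlt).2; rw [hm]; rw [hδdef] at this; linarith
  · rw [lhs_eq, key, mul_assoc, ← Complex.exp_add]
    congr 1
    push_cast
    ring

lemma factor_eq (x : ℝ) : (1 : ℂ) + Complex.I * (x : ℂ) =
    ((Real.sqrt (1 + x ^ 2) : ℝ) : ℂ) * Complex.exp ((Real.arctan x : ℂ) * Complex.I) := by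
  have h : Real.sqrt (1 + x ^ 2) ≠ 0 := by positivity
  rw [Complex.exp_mul_I, ← Complex.ofReal_cos, ← Complex.ofReal_sin,
    Real.cos_arctan, Real.sin_arctan]
  have h' : ((Real.sqrt (1 + x ^ 2) : ℝ) : ℂ) ≠ 0 := Complex.ofReal_ne_zero.2 h
  push_cast
  field_simp


/-- Lemma 8.2 (linear-algebraic part): if `μ ∈ ℝⁿ` satisfies the subsolution
condition `Σ_{i≠j} arctan μᵢ > Θ̂ - π/2` for every `j`, and `c_S ≥ 0` (not all
zero) are coefficients indexed by the `p`-element subsets `S` of `{1,…,n}`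
with `1 ≤ p ≤ n-1`, then `Σ_S c_S ∏_{i∈S} (1 + i μᵢ)` is a nonzero complex
number of the form `R e^{iφ}` with `R > 0` and
`Θ̂ - (n-p)π/2 < φ < pπ/2`. -/
theorem stmt_19 (n : ℕ) (hn : 2 ≤ n) (Θhat : ℝ)
    (h1 : ((n : ℝ) - 2) * (π / 2) < Θhat) (h2 : Θhat < (n : ℝ) * (π / 2))
    (μ : Fin n → ℝ)
    (hμ : ∀ j : Fin n, Θhat - π / 2 < ∑ i ∈ Finset.univ.erase j, Real.arctan (μ i))
    (p : ℕ) (hp1 : 1 ≤ p) (hp2 : p ≤ n - 1)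
    (c : Finset (Fin n) → ℝ)
    (hc : ∀ S ∈ Finset.powersetCard p (Finset.univ : Finset (Fin n)), 0 ≤ c S)
    (hne : ∃ S ∈ Finset.powersetCard p (Finset.univ : Finset (Fin n)), c S ≠ 0) :
    (∑ S ∈ Finset.powersetCard p (Finset.univ : Finset (Fin n)),
        (c S : ℂ) * ∏ i ∈ S, (1 + Complex.I * (μ i : ℂ))) ≠ 0 ∧
      ∃ R φ : ℝ, 0 < R ∧
        Θhat - ((n : ℝ) - p) * (π / 2) < φ ∧ φ < (p : ℝ) * (π / 2) ∧
        (∑ S ∈ Finset.powersetCard p (Finset.univ : Finset (Fin n)),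
            (c S : ℂ) * ∏ i ∈ S, (1 + Complex.I * (μ i : ℂ))) =
          (R : ℂ) * Complex.exp (Complex.I * (φ : ℂ)) := by
  have hpn : p < n := lt_of_le_of_lt hp2 (Nat.sub_lt (by omega) one_pos)
  set T := Finset.powersetCard p (Finset.univ : Finset (Fin n)) with hT
  set w : Finset (Fin n) → ℝ := fun S => c S * ∏ i ∈ S, Real.sqrt (1 + (μ i) ^ 2) with hw
  set θ : Finset (Fin n) → ℝ := fun S => ∑ i ∈ S, Real.arctan (μ i) with hθ
  set a : ℝ := Θhat - ((n : ℝ) - p) * (π / 2) with ha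
  set b : ℝ := (p : ℝ) * (π / 2) with hb
  -- rewrite the sum
  have hsum_eq : (∑ S ∈ T, (c S : ℂ) * ∏ i ∈ S, (1 + Complex.I * (μ i : ℂ))) =
      ∑ S ∈ T, (w S : ℂ) * Complex.exp ((θ S : ℂ) * Complex.I) := by
    refine Finset.sum_congr rfl fun S _ => ?_
    have hprod : (∏ i ∈ S, (1 + Complex.I * (μ i : ℂ))) =
        ((∏ i ∈ S, Real.sqrt (1 + (μ i) ^ 2) : ℝ) : ℂ) *
          Complex.exp ((θ S : ℂ) * Complex.I) := by
      rw [Finset.prod_congr rfl fun i _ => factor_eq (μ i), Finset.prod_mul_distrib,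
        ← Complex.exp_sum, Complex.ofReal_prod, hθ]
      congr 1
      rw [← Finset.sum_mul, ← Complex.ofReal_sum]
    rw [hprod, hw]
    push_cast
    ring
  rw [hsum_eq]
  have hprodpos : ∀ S : Finset (Fin n), 0 < ∏ i ∈ S, Real.sqrt (1 + (μ i) ^ 2) := by
    intro S
    apply Finset.prod_pos
    intro i _
    positivity
  have hθb : ∀ S ∈ T, θ S < b := by
    intro S hS
    obtain ⟨-, hcard⟩ := Finset.mem_powersetCard.1 hS
    have hSne : S.Nonempty := Finset.card_pos.1 (by omega)
    calc θ S < ∑ _i ∈ S, (π / 2) :=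
          Finset.sum_lt_sum_of_nonempty hSne fun i _ => Real.arctan_lt_pi_div_two _
    _ = b := by rw [Finset.sum_const, hcard, nsmul_eq_mul, hb]
  have hθa : ∀ S ∈ T, a < θ S := by
    intro S hS
    obtain ⟨-, hcard⟩ := Finset.mem_powersetCard.1 hS
    obtain ⟨j, hj⟩ : ∃ j : Fin n, j ∉ S := by
      by_contra h
      push_neg at h
      have : S = Finset.univ := Finset.eq_univ_iff_forall.2 h
      rw [this, Finset.card_univ, Fintype.card_fin] at hcard
      omega
    have hsub : S ⊆ Finset.univ.erase j := fun i hi =>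
      Finset.mem_erase.2 ⟨fun h => hj (h ▸ hi), Finset.mem_univ i⟩
    have hsplit : (∑ i ∈ Finset.univ.erase j \ S, Real.arctan (μ i)) + θ S =
        ∑ i ∈ Finset.univ.erase j, Real.arctan (μ i) := Finset.sum_sdiff hsub
    have hcard2 : (Finset.univ.erase j \ S).card = n - 1 - p := by
      rw [Finset.card_sdiff_of_subset hsub, Finset.card_erase_of_mem (Finset.mem_univ j),
        Finset.card_univ, Fintype.card_fin, hcard]
    have hbd : (∑ i ∈ Finset.univ.erase j \ S, Real.arctan (μ i)) ≤
        ((n : ℝ) - 1 - p) * (π / 2) := by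
      have := Finset.sum_le_card_nsmul (Finset.univ.erase j \ S) (fun i => Real.arctan (μ i))
        (π / 2) (fun i _ => (Real.arctan_lt_pi_div_two _).le)
      rw [hcard2, nsmul_eq_mul] at this
      have hcast : ((n - 1 - p : ℕ) : ℝ) = (n : ℝ) - 1 - p := by
        have : 1 + p ≤ n := by omega
        push_cast [Nat.sub_sub]
        rw [Nat.cast_sub (by omega)]
        push_cast
        ring
      rw [hcast] at this
      exact this
    have hring : ((n : ℝ) - 1 - p) * (π / 2) = ((n : ℝ) - p) * (π / 2) - π / 2 := by ring
    have := hμ j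
    rw [ha]
    linarith [hsplit, hbd]
  have hwnn : ∀ S ∈ T, 0 ≤ w S := fun S hS => mul_nonneg (hc S hS) (hprodpos S).le
  have hex : ∃ S ∈ T, 0 < w S := by
    obtain ⟨S₀, hS₀, hcS₀⟩ := hne
    exact ⟨S₀, hS₀, mul_pos (lt_of_le_of_ne (hc S₀ hS₀) (Ne.symm hcS₀)) (hprodpos S₀)⟩
  have hab : b - a < π := by
    have hr1 : (p : ℝ) * (π / 2) + ((n : ℝ) - p) * (π / 2) = (n : ℝ) * (π / 2) := by ring
    have hr2 : ((n : ℝ) - 2) * (π / 2) = (n : ℝ) * (π / 2) - π := by ring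
    rw [hb, ha]
    linarith
  obtain ⟨R, φ, hR, hφ1, hφ2, heq⟩ := sector_sum T w θ a b hab hwnn hθa hθb hex
  refine ⟨?_, R, φ, hR, hφ1, hφ2, heq⟩
  rw [heq]
  exact mul_ne_zero (Complex.ofReal_ne_zero.2 hR.ne') (Complex.exp_ne_zero _)
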